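/- Let ς > 0, η ∈ ℝ, and a ≥ 0, and let μ = gaussianReal η ς² be the Gaussian measure on ℝ with mean η and variance ς². Then the integral of the shifted upper tail satisfies ∫_{a}^{∞} μ{y : y − η ≥ x} dx ≤ √(2π) · ς · exp(−a² / (2ς²)). -/

import Mathlib

open MeasureTheory ProbabilityTheory Real
open scoped NNReal

theorem gaussian_shifted_tail_integral_le
    (ς : ℝ≥0) (hς : 0 < ς) (η : ℝ) (a : ℝ) (ha : 0 ≤ a) :
    ∫ x in Set.Ici a, ((gaussianReal η (ς ^ 2)) {y : ℝ | y - η ≥ x}).toReal ≤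
      Real.sqrt (2 * Real.pi) * (ς : ℝ) * Real.exp (-a ^ 2 / (2 * (ς : ℝ) ^ 2)) := by
  set s : ℝ := (ς : ℝ) with hs_def
  have hs : 0 < s := hς
  have hv : (ς ^ 2 : ℝ≥0) ≠ 0 := pow_ne_zero 2 hς.ne'
  have hvc : ((ς ^ 2 : ℝ≥0) : ℝ) = s ^ 2 := by push_cast; ring
  have hb : (0:ℝ) < (2 * s ^ 2)⁻¹ := by positivity
  -- the dominating function
  set G : ℝ → ℝ := fun x => Real.exp (-a ^ 2 / (2 * s ^ 2)) *
      Real.exp (-(2 * s ^ 2)⁻¹ * (x - a) ^ 2) with hG_def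
  have hGint : Integrable G := by
    exact ((integrable_exp_neg_mul_sq hb).comp_sub_right a).const_mul _
  -- pointwise bound on the tail
  have hpt : ∀ x, a ≤ x →
      ((gaussianReal η (ς ^ 2)) {y : ℝ | y - η ≥ x}).toReal ≤ G x := by
    intro x hx
    have hx0 : 0 ≤ x := ha.trans hx
    have hset : {y : ℝ | y - η ≥ x} = Set.Ici (x + η) := by
      ext y; simp only [Set.mem_setOf_eq, Set.mem_Ici, ge_iff_le]
      constructor <;> intro <;> linarith
    rw [hset, gaussianReal_apply_eq_integral η hv,
      ENNReal.toReal_ofReal (setIntegral_nonneg measurableSet_Ici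
        fun t _ => gaussianPDFReal_nonneg _ _ _)]
    have key : ∀ t ∈ Set.Ici (x + η), gaussianPDFReal η (ς ^ 2) t ≤
        Real.exp (-x ^ 2 / (2 * s ^ 2)) * gaussianPDFReal (x + η) (ς ^ 2) t := by
      intro t ht
      simp only [Set.mem_Ici] at ht
      simp only [gaussianPDFReal, hvc]
      rw [mul_left_comm]
      refine mul_le_mul_of_nonneg_left ?_ (by positivity)
      rw [← Real.exp_add, Real.exp_le_exp]
      have h1 : (t - η) ^ 2 ≥ x ^ 2 + (t - (x + η)) ^ 2 := by nlinarith
      rw [← add_div, div_le_div_iff_of_pos_right (by positivity : (0:ℝ) < 2 * s ^ 2)]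
      linarith
    calc ∫ t in Set.Ici (x + η), gaussianPDFReal η (ς ^ 2) t
        ≤ ∫ t in Set.Ici (x + η),
            Real.exp (-x ^ 2 / (2 * s ^ 2)) * gaussianPDFReal (x + η) (ς ^ 2) t :=
          setIntegral_mono_on (integrable_gaussianPDFReal _ _).integrableOn
            (((integrable_gaussianPDFReal _ _).const_mul _).integrableOn)
            measurableSet_Ici key
      _ = Real.exp (-x ^ 2 / (2 * s ^ 2)) *
            ∫ t in Set.Ici (x + η), gaussianPDFReal (x + η) (ς ^ 2) t := by
          rw [integral_const_mul]
      _ ≤ Real.exp (-x ^ 2 / (2 * s ^ 2)) * 1 := by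
          gcongr
          rw [← integral_gaussianPDFReal_eq_one (x + η) hv]
          exact setIntegral_le_integral (integrable_gaussianPDFReal _ _)
            (ae_of_all _ fun t => gaussianPDFReal_nonneg _ _ _)
      _ ≤ G x := by
          rw [mul_one]
          show Real.exp (-x ^ 2 / (2 * s ^ 2)) ≤
            Real.exp (-a ^ 2 / (2 * s ^ 2)) * Real.exp (-(2 * s ^ 2)⁻¹ * (x - a) ^ 2)
          rw [← Real.exp_add, Real.exp_le_exp]
          have h2 : x ^ 2 ≥ a ^ 2 + (x - a) ^ 2 := by nlinarith
          have : -(2 * s ^ 2)⁻¹ * (x - a) ^ 2 = -(x-a)^2 / (2 * s ^ 2) := by ring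
          rw [this, ← add_div,
            div_le_div_iff_of_pos_right (by positivity : (0:ℝ) < 2 * s ^ 2)]
          linarith
  -- integrate the bound
  have step1 : ∫ x in Set.Ici a, ((gaussianReal η (ς ^ 2)) {y : ℝ | y - η ≥ x}).toReal ≤
      ∫ x in Set.Ici a, G x := by
    refine integral_mono_of_nonneg (ae_of_all _ fun x => ENNReal.toReal_nonneg)
      hGint.integrableOn ?_
    filter_upwards [ae_restrict_mem measurableSet_Ici] with x hx
    exact hpt x hx
  refine step1.trans ?_
  have step2 : ∫ x in Set.Ici a, G x ≤ Real.exp (-a ^ 2 / (2 * s ^ 2)) *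
      ∫ x : ℝ, Real.exp (-(2 * s ^ 2)⁻¹ * (x - a) ^ 2) := by
    rw [hG_def]
    simp only [integral_const_mul]
    refine mul_le_mul_of_nonneg_left ?_ (Real.exp_pos _).le
    exact setIntegral_le_integral ((integrable_exp_neg_mul_sq hb).comp_sub_right a)
      (ae_of_all _ fun t => (Real.exp_pos _).le)
  refine step2.trans ?_
  have step3 : ∫ x : ℝ, Real.exp (-(2 * s ^ 2)⁻¹ * (x - a) ^ 2) =
      Real.sqrt (2 * Real.pi) * s := by
    rw [integral_sub_right_eq_self (fun x => Real.exp (-(2 * s ^ 2)⁻¹ * x ^ 2)) a,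
      integral_gaussian]
    rw [← Real.sqrt_mul_self hs.le, ← Real.sqrt_mul (by positivity)]
    congr 1
    field_simp
    ring
    exact Real.sq_sqrt (by positivity)
  rw [step3]
  ring_nf
  exact le_refl _
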